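/- Let α1, α2 ∈ (0,1] with γ := α1 + α2 satisfying 1 < γ ≤ 2, and βi := √(αi(1−αi)). Then the real symmetric 4×4 matrix T1 = (1/(2γ))·[[γ, 0, 0, −β1β2γ/(α1α2)], [0, γ−1, 0, −(γ−1)β1/α1], [0, 0, γ−1, −(γ−1)β2/α2], [−β1β2γ/(α1α2), −(γ−1)β1/α1, −(γ−1)β2/α2, 2−γ]] is positive semidefinite. -/

import Mathlib

open Matrix ComplexOrder

noncomputable section

set_option maxHeartbeats 1600000 in
/-- The matrix `T1` from the sufficiency proof is positive semidefinite. -/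
theorem T1_posSemidef (α1 α2 γ β1 β2 : ℝ)
    (hα1 : α1 ∈ Set.Ioc (0:ℝ) 1) (hα2 : α2 ∈ Set.Ioc (0:ℝ) 1)
    (hγ : γ = α1 + α2) (hγ1 : 1 < γ) (hγ2 : γ ≤ 2)
    (hβ1 : β1 = Real.sqrt (α1 * (1 - α1))) (hβ2 : β2 = Real.sqrt (α2 * (1 - α2))) :
    (((1 / (2 * γ)) •
      !![γ, 0, 0, -(β1 * β2 * γ / (α1 * α2));
         0, γ - 1, 0, -((γ - 1) * β1 / α1);
         0, 0, γ - 1, -((γ - 1) * β2 / α2);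
         -(β1 * β2 * γ / (α1 * α2)), -((γ - 1) * β1 / α1), -((γ - 1) * β2 / α2), 2 - γ]
      : Matrix (Fin 4) (Fin 4) ℝ).map Complex.ofReal).PosSemidef := by
  obtain ⟨hα1p, hα11⟩ := hα1
  obtain ⟨hα2p, hα21⟩ := hα2
  subst hγ
  set γ := α1 + α2 with hγdef
  have hγ0 : (0:ℝ) < γ := by linarith
  have hg0 : (0:ℝ) < γ - 1 := by linarith
  have hβ1sq : β1 ^ 2 = α1 * (1 - α1) := by
    rw [hβ1]; exact Real.sq_sqrt (by nlinarith)
  have hβ2sq : β2 ^ 2 = α2 * (1 - α2) := by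
    rw [hβ2]; exact Real.sq_sqrt (by nlinarith)
  set b := β1 * β2 * γ / (α1 * α2) with hbdef
  set c := (γ - 1) * β1 / α1 with hcdef
  set d := (γ - 1) * β2 / α2 with hddef
  set sγ := Real.sqrt γ with hsγdef
  set sg := Real.sqrt (γ - 1) with hsgdef
  set s := Real.sqrt (2 * γ) with hsdef
  have hsγ : sγ * sγ = γ := Real.mul_self_sqrt hγ0.le
  have hsg : sg * sg = γ - 1 := Real.mul_self_sqrt hg0.le
  have hs : s * s = 2 * γ := Real.mul_self_sqrt (by linarith)
  have hsγ0 : sγ ≠ 0 := (Real.sqrt_pos.mpr hγ0).ne'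
  have hsg0 : sg ≠ 0 := (Real.sqrt_pos.mpr hg0).ne'
  have hs0 : s ≠ 0 := (Real.sqrt_pos.mpr (by linarith)).ne'
  have hα1ne : α1 ≠ 0 := hα1p.ne'
  have hα2ne : α2 ≠ 0 := hα2p.ne'
  set Lr : Matrix (Fin 3) (Fin 4) ℝ :=
    (1 / s) • !![sγ, 0, 0, -(b / sγ); 0, sg, 0, -(c / sg); 0, 0, sg, -(d / sg)] with hLr
  have key : ((1 / (2 * γ)) •
      !![γ, 0, 0, -b; 0, γ - 1, 0, -c; 0, 0, γ - 1, -d; -b, -c, -d, 2 - γ]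
      : Matrix (Fin 4) (Fin 4) ℝ) = Lrᵀ * Lr := by
    have h1 : sγ * sγ⁻¹ = 1 := mul_inv_cancel₀ hsγ0
    have h2 : sg * sg⁻¹ = 1 := mul_inv_cancel₀ hsg0
    have h3 : s⁻¹ * s⁻¹ = γ⁻¹ * 2⁻¹ := by rw [← mul_inv, hs, mul_inv, mul_comm]
    have h4 := hsγ
    have h5 := hsg
    have hK : b ^ 2 * (sγ⁻¹ * sγ⁻¹) + c ^ 2 * (sg⁻¹ * sg⁻¹) + d ^ 2 * (sg⁻¹ * sg⁻¹) = 2 - γ := by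
      rw [← mul_inv, ← mul_inv, hsγ, hsg, hbdef, hcdef, hddef]
      simp only [div_pow, mul_pow, hβ1sq, hβ2sq]
      have hg0' := hg0.ne'
      have hγ0' := hγ0.ne'
      field_simp
      rw [hγdef]
      ring
    ext i j
    fin_cases i <;> fin_cases j <;>
      simp [hLr, Matrix.mul_apply, Fin.sum_univ_three, Matrix.smul_apply, Matrix.transpose_apply, Matrix.vecHead, Matrix.vecTail, div_eq_mul_inv]
    · linear_combination (-sγ^2) * h3 + (-γ⁻¹*2⁻¹) * h4
    · linear_combination (-b) * h3 + (-(s⁻¹*s⁻¹*b)) * h1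
    · linear_combination (-sg^2) * h3 + (-γ⁻¹*2⁻¹) * h5
    · linear_combination (-c) * h3 + (-(s⁻¹*s⁻¹*c)) * h2
    · linear_combination (-sg^2) * h3 + (-γ⁻¹*2⁻¹) * h5
    · linear_combination (-d) * h3 + (-(s⁻¹*s⁻¹*d)) * h2
    · linear_combination (-b) * h3 + (-(s⁻¹*s⁻¹*b)) * h1
    · linear_combination (-c) * h3 + (-(s⁻¹*s⁻¹*c)) * h2
    · linear_combination (-d) * h3 + (-(s⁻¹*s⁻¹*d)) * h2
    · linear_combination (-(b ^ 2 * (sγ⁻¹ * sγ⁻¹) + c ^ 2 * (sg⁻¹ * sg⁻¹) + d ^ 2 * (sg⁻¹ * sg⁻¹))) * h3 + (-γ⁻¹*2⁻¹) * hK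
  have hfact := Matrix.posSemidef_conjTranspose_mul_self (Lr.map Complex.ofReal)
  have hct : (Lr.map Complex.ofReal)ᴴ = Lrᵀ.map Complex.ofReal := by
    ext i j
    simp [Matrix.conjTranspose_apply, Matrix.map_apply, Complex.conj_ofReal]
  rw [hct, show Lrᵀ.map Complex.ofReal = Lrᵀ.map Complex.ofRealHom from rfl,
    show Lr.map Complex.ofReal = Lr.map Complex.ofRealHom from rfl,
    ← Matrix.map_mul, ← key] at hfact
  exact hfact
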